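/- Let c*, h*, V_tot be positive constants and let R, U : I → ℝ be differentiable on an interval I with R'(t) = U(t), (V_tot − π·R(t)²·h*)·U'(t) = 2π·R(t)·h*·(U(t)² − c*²), c*² − U(t)² > 0 and V_tot − π·R(t)²·h* > 0 on I. Fix τ ∈ I and set β = √( c*² − U(τ)² ) · ( V_tot − π·R(τ)²·h* ) > 0. Then for every t ∈ I: V_tot − π·R(t)²·h* ≥ β/c*, hence R(t)² ≤ ( V_tot − β/c* ) / (π·h*) ≤ V_tot / (π·h*). In particular the radius in Regime 2 never exceeds √( V_tot / (π·h*) ). -/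

import Mathlib

open Real

lemma regime2_const_of_deriv_zero {I : Set ℝ} (hI : I.OrdConnected) {f : ℝ → ℝ}
    (hf : ∀ t ∈ I, HasDerivAt f 0 t) : ∀ a ∈ I, ∀ b ∈ I, f a = f b := by
  have key : ∀ a ∈ I, ∀ b ∈ I, a ≤ b → f b = f a := by
    intro a ha b hb hab
    have hsub : Set.Icc a b ⊆ I := hI.out ha hb
    exact constant_of_has_deriv_right_zero
      (fun x hx => (hf x (hsub hx)).continuousAt.continuousWithinAt)
      (fun x hx => (hf x (hsub (Set.mem_Icc_of_Ico hx))).hasDerivWithinAt)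
      b (Set.right_mem_Icc.2 hab)
  intro a ha b hb
  rcases le_total a b with h | h
  · exact (key a ha b hb h).symm
  · exact key b hb a ha h

/-- For the Regime-2 rim-lamella system with conserved quantity
`β = √(c*² − U(τ)²)·(V_tot − πR(τ)²h*) > 0`, one has, for every `t ∈ I`:
`V_tot − πR(t)²h* ≥ β/c*`, hence `R(t)² ≤ (V_tot − β/c*)/(πh*) ≤ V_tot/(πh*)`; in
particular the radius in Regime 2 never exceeds `√(V_tot/(πh*))`. -/
theorem regime2_radius_bound
    (cstar hstar Vtot τ : ℝ) (hc : cstar > 0) (hh : hstar > 0) (hV : Vtot > 0)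
    (I : Set ℝ) (hI : I.OrdConnected) (hτ : τ ∈ I)
    (R U : ℝ → ℝ)
    (hR : ∀ t ∈ I, HasDerivAt R (U t) t)
    (hU : ∀ t ∈ I, DifferentiableAt ℝ U t)
    (hmom : ∀ t ∈ I,
      (Vtot - π * R t ^ 2 * hstar) * deriv U t
        = 2 * π * R t * hstar * (U t ^ 2 - cstar ^ 2))
    (hU2 : ∀ t ∈ I, cstar ^ 2 - U t ^ 2 > 0)
    (hV2 : ∀ t ∈ I, Vtot - π * R t ^ 2 * hstar > 0) :
    ∀ t ∈ I,
      Vtot - π * R t ^ 2 * hstar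
          ≥ Real.sqrt (cstar ^ 2 - U τ ^ 2) * (Vtot - π * R τ ^ 2 * hstar) / cstar
      ∧ R t ^ 2
          ≤ (Vtot - Real.sqrt (cstar ^ 2 - U τ ^ 2) * (Vtot - π * R τ ^ 2 * hstar) / cstar)
              / (π * hstar)
      ∧ (Vtot - Real.sqrt (cstar ^ 2 - U τ ^ 2) * (Vtot - π * R τ ^ 2 * hstar) / cstar)
              / (π * hstar)
          ≤ Vtot / (π * hstar)
      ∧ R t ≤ Real.sqrt (Vtot / (π * hstar)) := by
  set G : ℝ → ℝ := fun s => (cstar ^ 2 - U s ^ 2) * (Vtot - π * R s ^ 2 * hstar) ^ 2 with hGdef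
  have hG0 : ∀ t ∈ I, HasDerivAt G 0 t := by
    intro t ht
    have hRt := hR t ht
    have hUt : HasDerivAt U (deriv U t) t := (hU t ht).hasDerivAt
    have h1 : HasDerivAt (fun s => cstar ^ 2 - U s ^ 2)
        (0 - 2 * U t ^ 1 * deriv U t) t :=
      (hasDerivAt_const t (cstar ^ 2)).sub (hUt.pow 2)
    have h2 : HasDerivAt (fun s => Vtot - π * R s ^ 2 * hstar)
        (0 - π * (2 * R t ^ 1 * U t) * hstar) t :=
      (hasDerivAt_const t Vtot).sub (((hRt.pow 2).const_mul π).mul_const hstar)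
    have h3 := h1.mul (h2.pow 2)
    refine h3.congr_deriv ?_
    have e := hmom t ht
    push_cast
    simp only [Pi.pow_apply]
    linear_combination (-(2 * U t * (Vtot - π * R t ^ 2 * hstar))) * e
  have hcons : ∀ t ∈ I, G t = G τ := fun t ht =>
    regime2_const_of_deriv_zero hI hG0 t ht τ hτ
  intro t ht
  have hVτ := hV2 τ hτ
  have hUτ := hU2 τ hτ
  have hVt := hV2 t ht
  have hUt := hU2 t ht
  set b : ℝ := Real.sqrt (cstar ^ 2 - U τ ^ 2) * (Vtot - π * R τ ^ 2 * hstar) with hbdef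
  have hb0 : 0 ≤ b := mul_nonneg (Real.sqrt_nonneg _) hVτ.le
  have hbsq : b ^ 2 = (cstar ^ 2 - U τ ^ 2) * (Vtot - π * R τ ^ 2 * hstar) ^ 2 := by
    rw [hbdef, mul_pow, Real.sq_sqrt hUτ.le]
  have hGt : (cstar ^ 2 - U t ^ 2) * (Vtot - π * R t ^ 2 * hstar) ^ 2 = b ^ 2 := by
    rw [hbsq]; exact hcons t ht
  -- b ≤ cstar * V t
  have hmain : b ≤ cstar * (Vtot - π * R t ^ 2 * hstar) := by
    nlinarith [sq_nonneg (U t), mul_pos hc hVt, sq_nonneg (cstar * (Vtot - π * R t ^ 2 * hstar) - b)]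
  have goal1 : Vtot - π * R t ^ 2 * hstar ≥ b / cstar := by
    rw [ge_iff_le, div_le_iff₀ hc]; linarith [hmain]
  have hπh : (0:ℝ) < π * hstar := mul_pos Real.pi_pos hh
  have goal2 : R t ^ 2 ≤ (Vtot - b / cstar) / (π * hstar) := by
    rw [le_div_iff₀ hπh]; nlinarith [goal1]
  have hbc : 0 ≤ b / cstar := div_nonneg hb0 hc.le
  have goal3 : (Vtot - b / cstar) / (π * hstar) ≤ Vtot / (π * hstar) := by
    exact (div_le_div_iff_of_pos_right hπh).2 (by linarith)
  have goal4 : R t ≤ Real.sqrt (Vtot / (π * hstar)) := by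
    have h1 : R t ≤ Real.sqrt (R t ^ 2) := by
      rw [Real.sqrt_sq_eq_abs]; exact le_abs_self _
    refine h1.trans (Real.sqrt_le_sqrt ?_)
    exact goal2.trans goal3
  exact ⟨goal1, goal2, goal3, goal4⟩
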